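/- arXiv:2006.07851 — 3 statements merged into one kernel-verified Lean document; each statement's English description precedes it below -/
import Mathlib

section
/- Let g : (0, ∞) → ℝ be differentiable, concave, non-decreasing, and positive. Fix ε > 0 and consecutive breakpoints b_{k-1} < b_k with tangent point μₖ ∈ (b_{k-1}, b_k) such that the tangent line ℓ(μ) = g(μₖ) + g′(μₖ)(μ − μₖ) satisfies ℓ(b_{k-1}) = (1+ε)g(b_{k-1}) and ℓ(b_k) = (1+ε)g(b_k). Then for every μ ∈ [b_{k-1}, b_k], 0 ≤ (ℓ(μ) − g(μ))/g(μ) ≤ ε. -/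
theorem piecewise_linearization_relative_error
    (g g' : ℝ → ℝ) (ε : ℝ) (b₀ b₁ μk : ℝ)
    (hderiv : ∀ x ∈ Set.Ioi (0 : ℝ), HasDerivAt g (g' x) x)
    (hconc : ConcaveOn ℝ (Set.Ioi (0 : ℝ)) g)
    (hmono : MonotoneOn g (Set.Ioi (0 : ℝ)))
    (hpos : ∀ x ∈ Set.Ioi (0 : ℝ), 0 < g x)
    (hε : 0 < ε) (hb₀ : 0 < b₀) (hbb : b₀ < b₁)
    (hμk : μk ∈ Set.Ioo b₀ b₁)
    (h0 : g μk + g' μk * (b₀ - μk) = (1 + ε) * g b₀)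
    (h1 : g μk + g' μk * (b₁ - μk) = (1 + ε) * g b₁) :
    ∀ μ ∈ Set.Icc b₀ b₁,
      0 ≤ ((g μk + g' μk * (μ - μk)) - g μ) / g μ ∧
      ((g μk + g' μk * (μ - μk)) - g μ) / g μ ≤ ε := by
  intro μ hμ
  have hμ0 : (0 : ℝ) < μ := lt_of_lt_of_le hb₀ hμ.1
  have hμmem : μ ∈ Set.Ioi (0 : ℝ) := hμ0
  have hμkmem : μk ∈ Set.Ioi (0 : ℝ) := lt_trans hb₀ hμk.1
  have hgμ : 0 < g μ := hpos μ hμmem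
  have hdk : HasDerivAt g (g' μk) μk := hderiv μk hμkmem
  -- Lower bound: tangent line lies above g
  have hlow : g μ ≤ g μk + g' μk * (μ - μk) := by
    rcases lt_trichotomy μ μk with h | h | h
    · have hs : g' μk ≤ slope g μ μk :=
        hconc.le_slope_of_hasDerivAt hμmem hμkmem h hdk
      rw [slope_def_field, le_div_iff₀ (by linarith)] at hs
      nlinarith
    · simp [h]
    · have hs : slope g μk μ ≤ g' μk :=
        hconc.slope_le_of_hasDerivAt hμkmem hμmem h hdk
      rw [slope_def_field, div_le_iff₀ (by linarith)] at hs
      nlinarith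
  -- Upper bound: h(μ) = ℓ(μ) − (1+ε) g(μ) is convex, ≤ 0 at endpoints
  have haff : ConvexOn ℝ (Set.Ioi (0 : ℝ)) (fun x => g μk + g' μk * (x - μk)) := by
    refine ⟨convex_Ioi 0, ?_⟩
    intro x _ y _ a b ha hb hab
    simp only [smul_eq_mul]
    exact le_of_eq (by linear_combination (g' μk * μk - g μk) * hab)
  have hcv : ConvexOn ℝ (Set.Ioi (0 : ℝ))
      (fun x => (g μk + g' μk * (x - μk)) - (1 + ε) * g x) := by
    have := (hconc.smul (c := 1 + ε) (by linarith)).neg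
    have h2 := haff.add this
    convert h2 using 1
    · rfl
    · funext y
      show g μk + g' μk * (y - μk) - (1 + ε) * g y = (g μk + g' μk * (y - μk)) + -((1 + ε) * g y)
      ring
  have hb₁pos : b₁ ∈ Set.Ioi (0 : ℝ) := lt_trans hb₀ hbb
  have hseg : μ ∈ segment ℝ b₀ b₁ := by
    rw [segment_eq_Icc hbb.le]; exact hμ
  obtain ⟨a, b, ha, hb, hab, hz⟩ := hseg
  have hmax := hcv.le_on_segment' (Set.mem_Ioi.mpr hb₀) hb₁pos ha hb hab
  rw [hz] at hmax
  have e0 : (g μk + g' μk * (b₀ - μk)) - (1 + ε) * g b₀ = 0 := by linarith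
  have e1 : (g μk + g' μk * (b₁ - μk)) - (1 + ε) * g b₁ = 0 := by linarith
  simp only [e0, e1, max_self] at hmax
  constructor
  · apply div_nonneg _ hgμ.le; linarith
  · rw [div_le_iff₀ hgμ]; linarith
end

section
/- Let d : J → ℝ and b : J → ℝ≥0 on a finite index set J, and define h(y) = Σⱼ dⱼyⱼ + √(Σⱼ bⱼ yⱼ) for y ∈ {0,1}^J. If dⱼ ≥ 0 then there is an optimal solution y* of min h with y*ⱼ = 0; and if dⱼ < 0 and bⱼ = 0 then every optimal solution has yⱼ = 1. -/
lemma sum_update_mul {J : Type} [Fintype J] [DecidableEq J] (f y : J → ℝ) (j : J) (c : ℝ) :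
    ∑ i, f i * Function.update y j c i = (∑ i, f i * y i) - f j * y j + f j * c := by
  rw [← Finset.add_sum_erase _ (fun i => f i * Function.update y j c i) (Finset.mem_univ j),
      ← Finset.add_sum_erase _ (fun i => f i * y i) (Finset.mem_univ j)]
  have : ∑ i ∈ Finset.univ.erase j, f i * Function.update y j c i
      = ∑ i ∈ Finset.univ.erase j, f i * y i := by
    apply Finset.sum_congr rfl
    intro i hi
    rw [Function.update_of_ne (Finset.ne_of_mem_erase hi)]
  rw [this, Function.update_self]
  ring

theorem binary_linear_sqrt_min_fixing
    {J : Type} [Fintype J] (d : J → ℝ) (b : J → ℝ) (hb : ∀ j, 0 ≤ b j) (j : J) :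
    let Binary : (J → ℝ) → Prop := fun y => ∀ i, y i = 0 ∨ y i = 1
    let h : (J → ℝ) → ℝ := fun y => (∑ i, d i * y i) + Real.sqrt (∑ i, b i * y i)
    (d j ≥ 0 →
      ∃ y : J → ℝ, Binary y ∧ (∀ z : J → ℝ, Binary z → h y ≤ h z) ∧ y j = 0) ∧
    (d j < 0 → b j = 0 →
      ∀ y : J → ℝ, Binary y → (∀ z : J → ℝ, Binary z → h y ≤ h z) → y j = 1) := by
  intro Binary h
  classical
  -- finite set of binary vectors
  set S : Finset (J → ℝ) :=
    (Finset.univ : Finset (J → Bool)).image (fun f i => if f i then (1:ℝ) else 0) with hS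
  have hmemS : ∀ y : J → ℝ, Binary y → y ∈ S := by
    intro y hy
    refine Finset.mem_image.mpr ⟨fun i => y i = 1, Finset.mem_univ _, ?_⟩
    funext i
    rcases hy i with h0 | h1
    · simp [h0]
    · simp [h1]
  have hSbin : ∀ y ∈ S, Binary y := by
    intro y hy
    rcases Finset.mem_image.mp hy with ⟨f, _, rfl⟩
    intro i
    by_cases hf : f i <;> simp [hf]
  constructor
  · intro hdj
    have hne : S.Nonempty := ⟨fun _ => 0, hmemS _ (fun i => Or.inl rfl)⟩
    obtain ⟨y, hyS, hymin⟩ := S.exists_min_image h hne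
    have hyB := hSbin y hyS
    set y' := Function.update y j 0 with hy'
    have hy'B : Binary y' := by
      intro i
      by_cases hij : i = j
      · subst hij; left; simp [hy']
      · simpa [hy', Function.update_of_ne hij] using hyB i
    have hle : h y' ≤ h y := by
      have hd : ∑ i, d i * y' i ≤ ∑ i, d i * y i := by
        rw [hy', sum_update_mul]
        have : 0 ≤ d j * y j := by
          rcases hyB j with h0 | h1
          · simp [h0]
          · simpa [h1] using hdj
        linarith
      have hbb : Real.sqrt (∑ i, b i * y' i) ≤ Real.sqrt (∑ i, b i * y i) := by
        apply Real.sqrt_le_sqrt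
        rw [hy', sum_update_mul]
        have : 0 ≤ b j * y j := by
          rcases hyB j with h0 | h1
          · simp [h0]
          · simpa [h1] using hb j
        linarith
      simp only [h]
      exact add_le_add hd hbb
    refine ⟨y', hy'B, ?_, by simp [hy']⟩
    intro z hz
    exact le_trans hle (hymin z (hmemS z hz))
  · intro hdj hbj y hyB hymin
    by_contra hne1
    have hy0 : y j = 0 := (hyB j).resolve_right hne1
    set y' := Function.update y j 1 with hy'
    have hy'B : Binary y' := by
      intro i
      by_cases hij : i = j
      · subst hij; right; simp [hy']
      · simpa [hy', Function.update_of_ne hij] using hyB i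
    have : h y' < h y := by
      simp only [h]
      have hd : ∑ i, d i * y' i = (∑ i, d i * y i) + d j := by
        rw [hy', sum_update_mul, hy0]; ring
      have hbb : ∑ i, b i * y' i = ∑ i, b i * y i := by
        rw [hy', sum_update_mul, hbj, hy0]; ring
      rw [hd, hbb]
      linarith
    exact absurd (hymin y' hy'B) (not_le.mpr this)
end

section
/- Let Ĵ be a finite index set with dⱼ < 0 and bⱼ > 0 for all j ∈ Ĵ, ordered so that d₁/b₁ ≤ d₂/b₂ ≤ … ≤ d_{|Ĵ|}/b_{|Ĵ|}. Then there exists an optimal solution of min over y ∈ {0,1}^Ĵ of h(y) = Σⱼ dⱼyⱼ + √(Σⱼ bⱼyⱼ) of the form y₁ = … = y_m = 1, y_{m+1} = … = y_{|Ĵ|} = 0 for some 0 ≤ m ≤ |Ĵ| (i.e., an optimal solution selecting a prefix of the ordering). -/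
open Finset

theorem binary_linear_sqrt_prefix_optimal
    (n : ℕ) (d b : Fin n → ℝ)
    (hd : ∀ j, d j < 0) (hb : ∀ j, 0 < b j)
    (hsorted : ∀ i j : Fin n, i ≤ j → d i / b i ≤ d j / b j) :
    let Binary : (Fin n → ℝ) → Prop := fun y => ∀ i, y i = 0 ∨ y i = 1
    let h : (Fin n → ℝ) → ℝ := fun y => (∑ i, d i * y i) + Real.sqrt (∑ i, b i * y i)
    ∃ m : ℕ, m ≤ n ∧
      (∀ z : Fin n → ℝ, Binary z →
        h (fun i => if (i : ℕ) < m then (1 : ℝ) else 0) ≤ h z) := by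
  classical
  intro Binary h
  set H : Finset (Fin n) → ℝ := fun S => (∑ i ∈ S, d i) + Real.sqrt (∑ i ∈ S, b i) with hH
  -- h z = H (support of z) for binary z
  have key : ∀ z : Fin n → ℝ, Binary z → h z = H (univ.filter (fun i => z i = 1)) := by
    intro z hz
    simp only [hH, h]
    have e1 : ∀ f : Fin n → ℝ, (∑ i ∈ univ.filter (fun i => z i = 1), f i) = ∑ i, f i * z i := by
      intro f
      rw [Finset.sum_filter]
      apply Finset.sum_congr rfl
      intro i _
      rcases hz i with h0 | h0 <;> simp [h0]
    rw [e1 d, e1 b]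
  -- pick a minimizer of H
  obtain ⟨S₀, -, hS₀⟩ := Finset.exists_min_image (univ : Finset (Finset (Fin n))) H ⟨∅, mem_univ ∅⟩
  -- among minimizers, pick one of maximal cardinality
  set M := (univ : Finset (Finset (Fin n))).filter (fun S => H S ≤ H S₀) with hM
  obtain ⟨S, hSM, hScard⟩ := Finset.exists_max_image M Finset.card ⟨S₀, by simp [hM]⟩
  have hSmin : ∀ T, H S ≤ H T := by
    intro T
    exact ((mem_filter.mp hSM).2).trans (hS₀ T (mem_univ T))
  -- S is downward closed
  have hdc : ∀ i j : Fin n, i ≤ j → j ∈ S → i ∈ S := by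
    intro i j hij hjS
    by_contra hiS
    set B := ∑ k ∈ S, b k with hB
    have hbjB : b j ≤ B := Finset.single_le_sum (fun k _ => (hb k).le) hjS
    have hBpos : 0 < B := lt_of_lt_of_le (hb j) hbjB
    by_cases hA : H (insert i S) ≤ H S
    · -- insert i S is also a minimizer, with larger cardinality: contradiction
      have hmem : insert i S ∈ M :=
        mem_filter.mpr ⟨mem_univ _, hA.trans ((mem_filter.mp hSM).2)⟩
      have := hScard _ hmem
      rw [Finset.card_insert_of_notMem hiS] at this
      omega
    · -- then removing j strictly decreases H: contradiction with minimality
      push_neg at hA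
      set s0 := Real.sqrt B with hs0d
      set s1 := Real.sqrt (B + b i) with hs1d
      set s2 := Real.sqrt (B - b j) with hs2d
      have hs0 : s0 ^ 2 = B := Real.sq_sqrt hBpos.le
      have hs1 : s1 ^ 2 = B + b i := Real.sq_sqrt (by linarith [hb i])
      have hs2 : s2 ^ 2 = B - b j := Real.sq_sqrt (by linarith)
      have hs0pos : 0 < s0 := Real.sqrt_pos.mpr hBpos
      have hs2nn : 0 ≤ s2 := Real.sqrt_nonneg _
      have hs21 : s2 ≤ s1 := Real.sqrt_le_sqrt (by linarith [hb i, hb j])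
      -- rewrite hA
      have hAi : H (insert i S) = (d i + ∑ k ∈ S, d k) + s1 := by
        simp only [hH]
        rw [Finset.sum_insert hiS, Finset.sum_insert hiS, hs1d, add_comm B (b i)]
      have hHS : H S = (∑ k ∈ S, d k) + s0 := rfl
      have hA' : d i + s1 > s0 := by
        rw [hAi, hHS] at hA; linarith
      have hratio : d i * b j ≤ d j * b i :=
        (div_le_div_iff₀ (hb i) (hb j)).mp (hsorted i j hij)
      -- key inequality: d j > s2 - s0
      have hkey : d j > s2 - s0 := by
        have h1 : d i * (s0 + s1) > -(b i) := by nlinarith [hs0, hs1, hs0pos, Real.sqrt_nonneg (B + b i)]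
        have h2 : d j * (s0 + s1) > -(b j) := by nlinarith [hb i, hb j, hs0pos, Real.sqrt_nonneg (B + b i)]
        have h3 : d j * (s0 + s2) ≥ d j * (s0 + s1) := by
          have := hd j
          nlinarith
        have h4 : d j * (s0 + s2) > -(b j) := lt_of_lt_of_le h2 h3
        nlinarith [hs0, hs2, hs0pos, hs2nn]
      have hErase : H (S.erase j) = ((∑ k ∈ S, d k) - d j) + s2 := by
        simp only [hH]
        rw [Finset.sum_erase_eq_sub hjS, Finset.sum_erase_eq_sub hjS]
      have hlt : H (S.erase j) < H S := by
        rw [hErase, hHS]; linarith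
      exact absurd (hSmin (S.erase j)) (not_le.mpr hlt)
  -- S is a prefix of length m = card S
  set m := S.card with hm
  have hmn : m ≤ n := by
    have := Finset.card_le_card (Finset.subset_univ S)
    simpa using this
  have hmem : ∀ i : Fin n, i ∈ S ↔ (i : ℕ) < m := by
    intro i
    constructor
    · intro hiS
      have hsub : Finset.Iic i ⊆ S := fun k hk => hdc k i (Finset.mem_Iic.mp hk) hiS
      have := Finset.card_le_card hsub
      rw [Fin.card_Iic] at this
      omega
    · intro him
      by_contra hiS
      have hsub : S ⊆ Finset.Iio i := by
        intro k hk
        rw [Finset.mem_Iio]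
        by_contra hki
        exact hiS (hdc i k (le_of_not_gt hki) hk)
      have := Finset.card_le_card hsub
      rw [Fin.card_Iio] at this
      omega
  refine ⟨m, hmn, ?_⟩
  intro z hz
  have hbp : Binary (fun i : Fin n => if (i : ℕ) < m then (1 : ℝ) else 0) := by
    intro i
    by_cases hi : (i : ℕ) < m <;> simp [hi]
  rw [key z hz, key _ hbp]
  have hfe : (univ.filter fun i : Fin n => (if ((i : ℕ) < m) then (1 : ℝ) else 0) = 1) = S := by
    ext i
    simp only [Finset.mem_filter, Finset.mem_univ, true_and, hmem i]
    by_cases hi : (i : ℕ) < m <;> simp [hi]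
  rw [hfe]
  exact hSmin _
end
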